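/- For every m ≥ 2, the inradius s_m of C_m satisfies 2/√(log m + 5) < s_m < 2/√(log m). -/

import Mathlib

open scoped BigOperators
noncomputable section

def A (m : ℕ) : Set (EuclideanSpace ℝ (Fin m)) :=
  {v | (∀ i, v i = -1 ∨ v i = 0 ∨ v i = 1) ∧ v ≠ 0}

def B (m : ℕ) : Set (EuclideanSpace ℝ (Fin m)) :=
  (fun v => ‖v‖⁻¹ • v) '' A m

def s (m : ℕ) : ℝ :=
  sSup {r : ℝ | 0 ≤ r ∧ Metric.closedBall (0 : EuclideanSpace ℝ (Fin m)) r ⊆ convexHull ℝ (B m)}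

namespace S13

def dd (i : ℕ) : ℝ := Real.sqrt (i + 1) - Real.sqrt i

def DD (m : ℕ) : ℝ := ∑ i ∈ Finset.range m, dd i ^ 2

lemma dd_nonneg (i : ℕ) : 0 ≤ dd i := by
  have := Real.sqrt_le_sqrt (by push_cast; linarith : (i : ℝ) ≤ (i : ℝ) + 1)
  simpa [dd] using this

lemma dd_anti {i j : ℕ} (h : i ≤ j) : dd j ≤ dd i := by
  have hij : (i:ℝ) ≤ j := by exact_mod_cast h
  have h1 : Real.sqrt i ≤ Real.sqrt j := Real.sqrt_le_sqrt hij
  have h2 : Real.sqrt (i+1) ≤ Real.sqrt (j+1) := Real.sqrt_le_sqrt (by linarith)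
  have e1 : Real.sqrt i * Real.sqrt (i+1) ≤ Real.sqrt j * Real.sqrt (j+1) := by
    apply mul_le_mul h1 h2 (Real.sqrt_nonneg _) (Real.sqrt_nonneg _)
  -- dd i = 1/(√(i+1)+√i)
  have key : ∀ k : ℕ, dd k * (Real.sqrt (k+1) + Real.sqrt k) = 1 := by
    intro k
    have h1 : Real.sqrt (k+1) ^ 2 = (k:ℝ)+1 := Real.sq_sqrt (by positivity)
    have h2 : Real.sqrt (k:ℝ) ^ 2 = k := Real.sq_sqrt (by positivity)
    have : (Real.sqrt (k+1) - Real.sqrt k) * (Real.sqrt (k+1) + Real.sqrt k)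
        = Real.sqrt (k+1)^2 - Real.sqrt k ^2 := by ring
    rw [dd, this, h1, h2]; ring
  have pi : 0 < Real.sqrt (i+1) + Real.sqrt i := by
    have : (0:ℝ) < Real.sqrt (i+1) := Real.sqrt_pos.2 (by positivity)
    have := Real.sqrt_nonneg (i:ℝ); linarith
  have pj : 0 < Real.sqrt (j+1) + Real.sqrt j := by
    have : (0:ℝ) < Real.sqrt (j+1) := Real.sqrt_pos.2 (by positivity)
    have := Real.sqrt_nonneg (j:ℝ); linarith
  have hsum : Real.sqrt (i+1) + Real.sqrt i ≤ Real.sqrt (j+1) + Real.sqrt j := by linarith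
  have : dd j * (Real.sqrt (j+1) + Real.sqrt j) = dd i * (Real.sqrt (i+1) + Real.sqrt i) := by
    rw [key, key]
  nlinarith [dd_nonneg j]

lemma sum_dd (k : ℕ) : ∑ i ∈ Finset.range k, dd i = Real.sqrt k := by
  have := Finset.sum_range_sub (fun i : ℕ => Real.sqrt i) k
  simpa [dd, Real.sqrt_eq_zero'] using this

lemma sum_dd_subset (S : Finset ℕ) : ∑ i ∈ S, dd i ≤ Real.sqrt S.card := by
  induction S using Finset.induction_on_max with
  | empty => simp
  | insert a S ha ih =>
    have haS : a ∉ S := fun h => lt_irrefl a (ha a h)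
    rw [Finset.sum_insert haS, Finset.card_insert_of_notMem haS]
    have hcard : S.card ≤ a := by
      have : S ⊆ Finset.range a := fun b hb => Finset.mem_range.2 (ha b hb)
      simpa using Finset.card_le_card this
    have h1 : dd a ≤ dd S.card := dd_anti hcard
    have h2 : Real.sqrt S.card + dd S.card = Real.sqrt (S.card + 1) := by
      simp [dd]
    push_cast
    push_cast at h2
    linarith


-- dd i ^ 2 bounds
lemma dd_mul (k : ℕ) : dd k * (Real.sqrt (k+1) + Real.sqrt k) = 1 := by
  have h1 : Real.sqrt (k+1) ^ 2 = (k:ℝ)+1 := Real.sq_sqrt (by positivity)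
  have h2 : Real.sqrt (k:ℝ) ^ 2 = k := Real.sq_sqrt (by positivity)
  have : (Real.sqrt (k+1) - Real.sqrt k) * (Real.sqrt (k+1) + Real.sqrt k)
      = Real.sqrt (k+1)^2 - Real.sqrt k ^2 := by ring
  rw [dd, this, h1, h2]; ring

lemma dd_sq_gt (k : ℕ) : 1 / (4 * (k+1) : ℝ) < dd k ^ 2 := by
  have h1 : Real.sqrt ((k:ℝ)+1) ^ 2 = (k:ℝ)+1 := Real.sq_sqrt (by positivity)
  have h2 : Real.sqrt (k:ℝ) ^ 2 = k := Real.sq_sqrt (by positivity)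
  have hlt : Real.sqrt (k:ℝ) < Real.sqrt ((k:ℝ)+1) := by
    apply Real.sqrt_lt_sqrt (by positivity); linarith
  have hp : (0:ℝ) < Real.sqrt ((k:ℝ)+1) + Real.sqrt k := by
    have := Real.sqrt_nonneg (k:ℝ); nlinarith [Real.sqrt_pos.2 (show (0:ℝ) < (k:ℝ)+1 by positivity)]
  have hs : (Real.sqrt ((k:ℝ)+1) + Real.sqrt k)^2 < 4 * ((k:ℝ)+1) := by nlinarith
  have := dd_mul k
  rw [div_lt_iff₀ (by positivity)]
  have hdd : 0 < dd k := by nlinarith [dd_nonneg k]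
  nlinarith [mul_pos hdd hdd, sq_nonneg (Real.sqrt ((k:ℝ)+1) + Real.sqrt k)]

lemma dd_sq_le (k : ℕ) (hk : 1 ≤ k) : dd k ^ 2 < 1 / (4 * k : ℝ) := by
  have hk' : (1:ℝ) ≤ k := by exact_mod_cast hk
  have h1 : Real.sqrt ((k:ℝ)+1) ^ 2 = (k:ℝ)+1 := Real.sq_sqrt (by positivity)
  have h2 : Real.sqrt (k:ℝ) ^ 2 = k := Real.sq_sqrt (by positivity)
  have hle : Real.sqrt (k:ℝ) ≤ Real.sqrt ((k:ℝ)+1) := Real.sqrt_le_sqrt (by linarith)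
  have hkpos : (0:ℝ) < Real.sqrt (k:ℝ) := Real.sqrt_pos.2 (by linarith)
  have hlt : Real.sqrt (k:ℝ) < Real.sqrt ((k:ℝ)+1) := by
    apply Real.sqrt_lt_sqrt (by positivity); linarith
  have hs : 4 * (k:ℝ) < (Real.sqrt ((k:ℝ)+1) + Real.sqrt k)^2 := by nlinarith
  have := dd_mul k
  rw [lt_div_iff₀ (by positivity)]
  have hdd : 0 < dd k := by
    have hp : (0:ℝ) < Real.sqrt ((k:ℝ)+1) + Real.sqrt k := by nlinarith
    nlinarith [dd_nonneg k]
  nlinarith [mul_pos hdd hdd]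

-- harmonic vs log
lemma log_succ_sub (i : ℕ) : Real.log ((i:ℝ)+2) - Real.log ((i:ℝ)+1) ≤ 1 / ((i:ℝ)+1) := by
  have h := Real.log_le_sub_one_of_pos (show (0:ℝ) < ((i:ℝ)+2)/((i:ℝ)+1) by positivity)
  rw [Real.log_div (by positivity) (by positivity)] at h
  have : ((i:ℝ)+2)/((i:ℝ)+1) - 1 = 1/((i:ℝ)+1) := by field_simp; ring
  linarith
lemma sub_log_succ (i : ℕ) : 1 / ((i:ℝ)+2) ≤ Real.log ((i:ℝ)+2) - Real.log ((i:ℝ)+1) := by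
  have h := Real.log_le_sub_one_of_pos (show (0:ℝ) < ((i:ℝ)+1)/((i:ℝ)+2) by positivity)
  rw [Real.log_div (by positivity) (by positivity)] at h
  have : ((i:ℝ)+1)/((i:ℝ)+2) - 1 = -(1/((i:ℝ)+2)) := by field_simp; ring
  linarith

lemma harmonic_le (n : ℕ) : ∑ i ∈ Finset.range n, 1/((i:ℝ)+2) ≤ Real.log ((n:ℝ)+1) := by
  have tele := Finset.sum_range_sub (fun i : ℕ => Real.log ((i:ℝ)+1)) n
  calc ∑ i ∈ Finset.range n, 1/((i:ℝ)+2)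
      ≤ ∑ i ∈ Finset.range n, (Real.log ((i:ℝ)+2) - Real.log ((i:ℝ)+1)) :=
        Finset.sum_le_sum (fun i _ => sub_log_succ i)
    _ = Real.log ((n:ℝ)+1) := by
        have : ∀ i : ℕ, Real.log ((i:ℝ)+2) - Real.log ((i:ℝ)+1)
            = (fun j : ℕ => Real.log ((j:ℝ)+1)) (i+1) - (fun j : ℕ => Real.log ((j:ℝ)+1)) i := by
          intro i; push_cast; ring_nf
        rw [Finset.sum_congr rfl (fun i _ => this i), tele]; simp

lemma log_le_harmonic (n : ℕ) : Real.log ((n:ℝ)+1) ≤ ∑ i ∈ Finset.range n, 1/((i:ℝ)+1) := by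
  have tele := Finset.sum_range_sub (fun i : ℕ => Real.log ((i:ℝ)+1)) n
  calc Real.log ((n:ℝ)+1)
      = ∑ i ∈ Finset.range n, (Real.log ((i:ℝ)+2) - Real.log ((i:ℝ)+1)) := by
        have : ∀ i : ℕ, Real.log ((i:ℝ)+2) - Real.log ((i:ℝ)+1)
            = (fun j : ℕ => Real.log ((j:ℝ)+1)) (i+1) - (fun j : ℕ => Real.log ((j:ℝ)+1)) i := by
          intro i; push_cast; ring_nf
        rw [Finset.sum_congr rfl (fun i _ => this i), tele]; simp
    _ ≤ _ := Finset.sum_le_sum (fun i _ => log_succ_sub i)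

lemma DD_gt (m : ℕ) (hm : 1 ≤ m) : Real.log m / 4 < DD m := by
  have h1 : ∑ i ∈ Finset.range m, 1/(4*((i:ℝ)+1)) < DD m := by
    apply Finset.sum_lt_sum_of_nonempty ⟨0, Finset.mem_range.2 hm⟩
    intro i _; exact dd_sq_gt i
  have h2 : Real.log ((m:ℝ)+1) ≤ ∑ i ∈ Finset.range m, 1/((i:ℝ)+1) := log_le_harmonic m
  have h3 : Real.log (m:ℝ) < Real.log ((m:ℝ)+1) := by
    apply Real.log_lt_log (by exact_mod_cast hm); linarith
  have h4 : ∑ i ∈ Finset.range m, 1/(4*((i:ℝ)+1)) = (∑ i ∈ Finset.range m, 1/((i:ℝ)+1))/4 := by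
    rw [Finset.sum_div]; apply Finset.sum_congr rfl; intro i _; field_simp
  linarith

lemma DD_lt (m : ℕ) (hm : 2 ≤ m) : DD m < (Real.log m + 5) / 4 := by
  have hm1 : 1 ≤ m := le_trans (by norm_num) hm
  obtain ⟨n, rfl⟩ : ∃ n, m = n + 1 := ⟨m - 1, by omega⟩
  rw [DD, Finset.sum_range_succ']
  have h0 : dd 0 ^ 2 = 1 := by norm_num [dd]
  have h1 : ∑ i ∈ Finset.range n, dd (i+1) ^ 2 < ∑ i ∈ Finset.range n, 1/(4*((i:ℝ)+1)) := by
    apply Finset.sum_lt_sum_of_nonempty ⟨0, Finset.mem_range.2 (by omega)⟩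
    intro i _; simpa using dd_sq_le (i+1) (by omega)
  have h4 : ∑ i ∈ Finset.range n, 1/(4*((i:ℝ)+1)) = (∑ i ∈ Finset.range n, 1/((i:ℝ)+1))/4 := by
    rw [Finset.sum_div]; apply Finset.sum_congr rfl; intro i _; field_simp
  -- harmonic n ≤ 1 + log n
  have hn : 1 ≤ n := by omega
  obtain ⟨p, rfl⟩ : ∃ p, n = p + 1 := ⟨n - 1, by omega⟩
  have h5 : ∑ i ∈ Finset.range (p+1), 1/((i:ℝ)+1) ≤ 1 + Real.log ((p:ℝ)+1) := by
    rw [Finset.sum_range_succ']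
    have := harmonic_le p
    have e : ∑ i ∈ Finset.range p, (1:ℝ)/((((i+1:ℕ)):ℝ)+1) = ∑ i ∈ Finset.range p, 1/((i:ℝ)+2) :=
      Finset.sum_congr rfl (fun i _ => by push_cast; ring_nf)
    rw [e]
    push_cast
    norm_num
    simp only [one_div] at this ⊢
    linarith
  have h6 : Real.log ((p:ℝ)+1) ≤ Real.log ((p:ℝ)+2) := by
    apply Real.log_le_log (by positivity); linarith
  have hcast : Real.log ((p:ℝ)+1+1) = Real.log ((p:ℝ)+2) := by
    rw [show ((p:ℝ)+1+1) = (p:ℝ)+2 from by ring]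
  push_cast
  rw [hcast]
  linarith

lemma DD_pos (m : ℕ) (hm : 1 ≤ m) : 0 < DD m := by
  have := DD_gt m hm
  have : (0:ℝ) ≤ Real.log m := Real.log_natCast_nonneg m
  linarith [DD_gt m hm]


lemma abel_id (f g : ℕ → ℝ) (hg0 : g 0 = 0) (n : ℕ) :
    ∑ i ∈ Finset.range n, f i * (g (i+1) - g i)
      = ∑ i ∈ Finset.range n, (f i - f (i+1)) * g (i+1) + f n * g n := by
  induction n with
  | zero => simp [hg0]
  | succ n ih =>
    rw [Finset.sum_range_succ, ih, Finset.sum_range_succ]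
    ring

lemma DD_nonneg (m : ℕ) : 0 ≤ DD m :=
  Finset.sum_nonneg fun i _ => sq_nonneg _

lemma key (b : ℕ → ℝ) (t : ℝ) (m : ℕ)
    (hb : ∀ i, 0 ≤ b i) (hmono : ∀ i, b (i+1) ≤ b i)
    (hb0 : b m = 0)
    (hP : ∀ k, k ≤ m → ∑ i ∈ Finset.range k, b i ≤ t * Real.sqrt k) :
    ∑ i ∈ Finset.range m, b i ^ 2 ≤ t ^ 2 * DD m := by
  set P : ℕ → ℝ := fun k => ∑ i ∈ Finset.range k, b i with hP_def
  set g : ℕ → ℝ := fun k => Real.sqrt k with hg_def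
  have hg0 : g 0 = 0 := by simp [hg_def]
  have e1 : ∑ i ∈ Finset.range m, b i ^ 2 = ∑ i ∈ Finset.range m, b i * (P (i+1) - P i) := by
    apply Finset.sum_congr rfl; intro i _
    simp only [hP_def, Finset.sum_range_succ]; ring
  have e2 := abel_id b P (by simp [hP_def]) m
  have step1 : ∑ i ∈ Finset.range m, b i ^ 2
      ≤ ∑ i ∈ Finset.range m, (b i - b (i+1)) * (t * g (i+1)) + b m * (t * g m) := by
    rw [e1, e2, hb0]
    simp only [zero_mul, add_zero]
    apply Finset.sum_le_sum
    intro i hi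
    exact mul_le_mul_of_nonneg_left (hP (i+1) (Finset.mem_range.1 hi))
      (by linarith [hmono i])
  have e3 : ∑ i ∈ Finset.range m, (b i - b (i+1)) * (t * g (i+1)) + b m * (t * g m)
      = t * ∑ i ∈ Finset.range m, b i * dd i := by
    have := abel_id b (fun k => g k) hg0 m
    have hdd : ∀ i : ℕ, g (i+1) - g i = dd i := by
      intro i; simp only [hg_def, dd]; push_cast; ring
    calc ∑ i ∈ Finset.range m, (b i - b (i+1)) * (t * g (i+1)) + b m * (t * g m)
        = t * (∑ i ∈ Finset.range m, (b i - b (i+1)) * g (i+1) + b m * g m) := by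
          rw [mul_add, Finset.mul_sum]
          congr 1
          · exact Finset.sum_congr rfl fun i _ => by ring
          · ring
      _ = t * ∑ i ∈ Finset.range m, b i * (g (i+1) - g i) := by rw [this]
      _ = t * ∑ i ∈ Finset.range m, b i * dd i := by
          congr 1; exact Finset.sum_congr rfl fun i _ => by rw [hdd]
  have cs := Finset.sum_mul_sq_le_sq_mul_sq (Finset.range m) b dd
  set Q := ∑ i ∈ Finset.range m, b i ^ 2 with hQ
  have hQnn : 0 ≤ Q := Finset.sum_nonneg fun i _ => sq_nonneg _
  have hX : Q ≤ t * ∑ i ∈ Finset.range m, b i * dd i := by rw [← e3]; linarith [step1]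
  rcases le_or_gt Q 0 with h | h
  · have : Q = 0 := le_antisymm h hQnn
    rw [this]
    exact mul_nonneg (sq_nonneg t) (DD_nonneg m)
  · -- Q² ≤ (t X)² ≤ t² Q D
    have hDD : (∑ i ∈ Finset.range m, b i * dd i)^2 ≤ Q * DD m := cs
    nlinarith [hX, hDD, h]

lemma sorted_key (m : ℕ) (a : Fin m → ℝ) (t : ℝ) (ht : 0 ≤ t)
    (ha : ∀ i, 0 ≤ a i)
    (hS : ∀ S : Finset (Fin m), S.Nonempty → ∑ i ∈ S, a i ≤ t * Real.sqrt S.card) :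
    ∑ i, a i ^ 2 ≤ t ^ 2 * DD m := by
  set σ : Equiv.Perm (Fin m) := Tuple.sort (fun i => -a i) with hσ
  have hanti : ∀ i j : Fin m, i ≤ j → a (σ j) ≤ a (σ i) := by
    intro i j hij
    have := Tuple.monotone_sort (fun i => -a i) hij
    simpa [hσ] using this
  set b : ℕ → ℝ := fun k => if h : k < m then a (σ ⟨k, h⟩) else 0 with hb_def
  have hbnn : ∀ i, 0 ≤ b i := by
    intro i; simp only [hb_def]; split
    · exact ha _
    · exact le_refl 0
  have hbmono : ∀ i, b (i+1) ≤ b i := by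
    intro i
    simp only [hb_def]
    by_cases h1 : i + 1 < m
    · have h0 : i < m := by omega
      rw [dif_pos h1, dif_pos h0]
      exact hanti ⟨i, h0⟩ ⟨i+1, h1⟩ (by simp)
    · rw [dif_neg h1]
      split
      · exact ha _
      · exact le_refl 0
  have hbm : b m = 0 := by simp [hb_def]
  have hpartial : ∀ k, k ≤ m → ∑ i ∈ Finset.range k, b i ≤ t * Real.sqrt k := by
    intro k hk
    rcases Nat.eq_zero_or_pos k with rfl | hk0
    · simp
    · -- sum over image set
      set T : Finset (Fin m) := Finset.image (fun i : Fin k => σ (Fin.castLE hk i)) Finset.univ with hT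
      have hinj : Function.Injective (fun i : Fin k => σ (Fin.castLE hk i)) := by
        intro x y hxy
        exact Fin.castLE_injective hk (σ.injective hxy)
      have hcard : T.card = k := by
        rw [hT, Finset.card_image_of_injective _ hinj, Finset.card_univ, Fintype.card_fin]
      have hsum : ∑ i ∈ T, a i = ∑ i ∈ Finset.range k, b i := by
        rw [hT, Finset.sum_image (fun x _ y _ h => hinj h)]
        rw [Finset.sum_range]
        apply Finset.sum_congr rfl
        intro i _
        have : (i : ℕ) < m := lt_of_lt_of_le i.2 hk
        simp only [hb_def, dif_pos this]
        congr 1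
      have hne : T.Nonempty := by
        rw [← Finset.card_pos, hcard]; exact hk0
      have := hS T hne
      rw [hsum, hcard] at this
      exact this
  have hkey := key b t m hbnn hbmono hbm hpartial
  have : ∑ i ∈ Finset.range m, b i ^ 2 = ∑ i, a i ^ 2 := by
    rw [Finset.sum_range]
    have e1 : ∀ i : Fin m, b i = a (σ i) := by
      intro i; simp only [hb_def, dif_pos i.2]
    calc ∑ i : Fin m, b i ^ 2 = ∑ i : Fin m, a (σ i) ^ 2 := by
          apply Finset.sum_congr rfl; intro i _; rw [e1]
      _ = ∑ i, a i ^ 2 := Equiv.sum_comp σ (fun i => a i ^ 2)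
  linarith

lemma inner_eq (m : ℕ) (x y : EuclideanSpace ℝ (Fin m)) :
    (inner ℝ x y : ℝ) = ∑ i, x i * y i := by
  simp [PiLp.inner_apply, RCLike.inner_apply, conj_trivial, mul_comm]

lemma norm_eq' (m : ℕ) (x : EuclideanSpace ℝ (Fin m)) : ‖x‖ = Real.sqrt (∑ i, x i ^2) := by
  rw [EuclideanSpace.norm_eq]
  congr 1; apply Finset.sum_congr rfl; intro i _
  rw [Real.norm_eq_abs, sq_abs]

variable {m : ℕ}

def supp (v : EuclideanSpace ℝ (Fin m)) : Finset (Fin m) :=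
  Finset.univ.filter (fun i => v i ≠ 0)

lemma normA (v : EuclideanSpace ℝ (Fin m)) (hv : v ∈ A m) :
    ‖v‖ = Real.sqrt (supp v).card := by
  rw [norm_eq']
  congr 1
  rw [← Finset.sum_filter_add_sum_filter_not Finset.univ (fun i => v i ≠ 0)]
  have h1 : ∑ i ∈ Finset.univ.filter (fun i => v i ≠ 0), v i ^ 2 = (supp v).card := by
    rw [Finset.card_eq_sum_ones, Nat.cast_sum]
    apply Finset.sum_congr rfl
    intro i hi
    have hi' := (Finset.mem_filter.1 hi).2
    rcases hv.1 i with h | h | h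
    · rw [h]; norm_num
    · exact absurd h hi'
    · rw [h]; norm_num
  have h2 : ∑ i ∈ Finset.univ.filter (fun i => ¬ v i ≠ 0), v i ^ 2 = 0 := by
    apply Finset.sum_eq_zero
    intro i hi
    have := (Finset.mem_filter.1 hi).2
    push_neg at this
    rw [this]; ring
  rw [h1, h2, supp]; ring

lemma suppA_pos (v : EuclideanSpace ℝ (Fin m)) (hv : v ∈ A m) : 0 < (supp v).card := by
  rw [Finset.card_pos]
  by_contra h
  rw [Finset.not_nonempty_iff_eq_empty] at h
  apply hv.2
  ext i
  by_contra hi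
  have : i ∈ supp v := Finset.mem_filter.2 ⟨Finset.mem_univ _, hi⟩
  rw [h] at this
  exact absurd this (Finset.notMem_empty i)

lemma normA_pos (v : EuclideanSpace ℝ (Fin m)) (hv : v ∈ A m) : 0 < ‖v‖ := by
  rw [normA v hv]
  have := suppA_pos v hv
  positivity

-- the distinguished direction
def dvec (m : ℕ) : EuclideanSpace ℝ (Fin m) := WithLp.toLp 2 (fun i : Fin m => dd i.val)

lemma norm_dvec_sq : ‖dvec m‖ ^ 2 = DD m := by
  rw [norm_eq', Real.sq_sqrt (Finset.sum_nonneg fun i _ => sq_nonneg _)]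
  rw [DD, Finset.sum_range fun i => dd i ^ 2]
  rfl

lemma inner_dvec_le (b : EuclideanSpace ℝ (Fin m)) (hb : b ∈ B m) :
    (inner ℝ (dvec m) b : ℝ) ≤ 1 := by
  obtain ⟨v, hv, rfl⟩ := hb
  rw [real_inner_smul_right, inner_eq]
  have h1 : ∑ i, dvec m i * v i ≤ ∑ i ∈ supp v, dd i.val := by
    rw [← Finset.sum_filter_add_sum_filter_not Finset.univ (fun i => v i ≠ 0)]
    have h2 : ∑ i ∈ Finset.univ.filter (fun i => ¬ v i ≠ 0), dvec m i * v i = 0 := by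
      apply Finset.sum_eq_zero; intro i hi
      have := (Finset.mem_filter.1 hi).2
      push_neg at this
      rw [this]; ring
    rw [h2, add_zero]
    apply Finset.sum_le_sum
    intro i hi
    rcases hv.1 i with h | h | h
    · rw [h]; simp [dvec]; linarith [dd_nonneg i.val]
    · rw [h]; simp [dvec]; exact dd_nonneg i.val
    · rw [h]; simp [dvec]
  have h3 : ∑ i ∈ supp v, dd i.val ≤ Real.sqrt (supp v).card := by
    have := sum_dd_subset ((supp v).image Fin.val)
    rwa [Finset.sum_image (fun x _ y _ h => Fin.val_injective h),
      Finset.card_image_of_injective _ Fin.val_injective] at this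
  rw [normA v hv]
  have hpos : (0:ℝ) < Real.sqrt (supp v).card := by
    have := suppA_pos v hv; positivity
  rw [inv_mul_le_iff₀ hpos] ---?
  calc ∑ i, dvec m i * v i ≤ Real.sqrt (supp v).card := le_trans h1 h3
    _ = Real.sqrt (supp v).card * 1 := by ring

lemma abs_sum_bound (y : EuclideanSpace ℝ (Fin m)) (c : ℝ)
    (hy : ∀ b ∈ B m, (inner ℝ y b : ℝ) < c)
    (S : Finset (Fin m)) (hS : S.Nonempty) :
    ∑ i ∈ S, |y i| ≤ c * Real.sqrt S.card := by
  classical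
  set v : EuclideanSpace ℝ (Fin m) := WithLp.toLp 2 (fun i => if i ∈ S then (if y i < 0 then (-1:ℝ) else 1) else 0) with hv_def
  have hvA : v ∈ A m := by
    constructor
    · intro i
      simp only [hv_def, PiLp.toLp_apply]
      split
      · split
        · left; rfl
        · right; right; rfl
      · right; left; rfl
    · obtain ⟨i, hi⟩ := hS
      intro h
      have : v i = 0 := congrArg (fun w => w i) h
      simp only [hv_def, PiLp.toLp_apply, if_pos hi] at this
      split at this <;> norm_num at this
  have hsupp : supp v = S := by
    ext i
    simp only [supp, Finset.mem_filter, Finset.mem_univ, true_and, hv_def, PiLp.toLp_apply]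
    constructor
    · intro h; by_contra hi; rw [if_neg hi] at h; exact h rfl
    · intro hi; rw [if_pos hi]; split <;> norm_num
  have hinner : (inner ℝ y v : ℝ) = ∑ i ∈ S, |y i| := by
    rw [inner_eq]
    rw [← Finset.sum_filter_add_sum_filter_not Finset.univ (fun i => i ∈ S)]
    have h2 : ∑ i ∈ Finset.univ.filter (fun i => ¬ i ∈ S), y i * v i = 0 := by
      apply Finset.sum_eq_zero; intro i hi
      have := (Finset.mem_filter.1 hi).2
      simp only [hv_def, PiLp.toLp_apply, if_neg this]; ring
    have h0 : Finset.univ.filter (fun i => i ∈ S) = S := by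
      ext i; simp
    rw [h2, add_zero, h0]
    apply Finset.sum_congr rfl
    intro i hi
    simp only [hv_def, PiLp.toLp_apply, if_pos hi]
    rcases lt_or_ge (y i) 0 with h | h
    · rw [if_pos h, abs_of_neg h]; ring
    · rw [if_neg (not_lt.2 h), abs_of_nonneg h]; ring
  have hB : ‖v‖⁻¹ • v ∈ B m := ⟨v, hvA, rfl⟩
  have := hy _ hB
  rw [real_inner_smul_right, hinner, normA v hvA, hsupp] at this
  have hpos : (0:ℝ) < Real.sqrt S.card := by
    have : 0 < S.card := Finset.card_pos.2 hS
    positivity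
  rw [inv_mul_lt_iff₀ hpos] at this
  linarith [this]


variable {m : ℕ}

lemma B_finite (m : ℕ) : (B m).Finite := by
  apply Set.Finite.image
  refine Set.Finite.of_finite_image (f := WithLp.ofLp) ?_ (WithLp.ofLp_injective 2).injOn
  apply Set.Finite.subset (Set.Finite.pi (fun i : Fin m => Set.toFinite ({-1, 0, 1} : Set ℝ)))
  rintro _ ⟨v, hv, rfl⟩
  rw [Set.mem_pi]
  intro i _
  rcases hv.1 i with h | h | h <;> simp [h]

lemma B_symm {b : EuclideanSpace ℝ (Fin m)} (hb : b ∈ B m) : -b ∈ B m := by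
  obtain ⟨v, hv, rfl⟩ := hb
  refine ⟨-v, ⟨fun i => ?_, fun h => hv.2 (by simpa using congrArg Neg.neg h)⟩, ?_⟩
  · rcases hv.1 i with h | h | h
    · right; right; show -v i = 1; simp [h]
    · right; left; show -v i = 0; simp [h]
    · left; show -v i = -1; simp [h]
  · show ‖-v‖⁻¹ • (-v) = -(‖v‖⁻¹ • v)
    rw [norm_neg, smul_neg]

lemma e0_mem (hm : 1 ≤ m) : (EuclideanSpace.single (⟨0, hm⟩ : Fin m) (1:ℝ)) ∈ B m := by
  set v := EuclideanSpace.single (⟨0, hm⟩ : Fin m) (1:ℝ) with hv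
  have hnorm : ‖v‖ = 1 := by rw [hv, EuclideanSpace.norm_single]; norm_num
  refine ⟨v, ⟨fun i => ?_, ?_⟩, show ‖v‖⁻¹ • v = v by rw [hnorm]; simp⟩
  · by_cases h : i = ⟨0, hm⟩
    · right; right; rw [hv, h]; simp [EuclideanSpace.single_apply]
    · right; left; rw [hv]; simp [EuclideanSpace.single_apply, h]
  · intro h
    have : v ⟨0, hm⟩ = 0 := congrArg (fun w => w ⟨0, hm⟩) h
    rw [hv] at this
    simp [EuclideanSpace.single_apply] at this

lemma zero_mem_conv (hm : 1 ≤ m) : (0 : EuclideanSpace ℝ (Fin m)) ∈ convexHull ℝ (B m) := by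
  have h1 := subset_convexHull ℝ (B m) (e0_mem hm)
  have h2 := subset_convexHull ℝ (B m) (B_symm (e0_mem hm))
  have := (convex_convexHull ℝ (B m)) h1 h2
    (by norm_num : (0:ℝ) ≤ 1/2) (by norm_num : (0:ℝ) ≤ 1/2) (by norm_num)
  convert this using 1
  set b := EuclideanSpace.single (⟨0, hm⟩ : Fin m) (1:ℝ)
  rw [smul_neg]
  abel

lemma upper (r : ℝ) (hm : 1 ≤ m) (hr : 0 ≤ r)
    (hball : Metric.closedBall (0 : EuclideanSpace ℝ (Fin m)) r ⊆ convexHull ℝ (B m)) :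
    r ≤ (Real.sqrt (DD m))⁻¹ := by
  have hDD := DD_pos m hm
  have hnorm : ‖dvec m‖ = Real.sqrt (DD m) := by
    rw [← norm_dvec_sq, Real.sqrt_sq (norm_nonneg _)]
  have hnpos : 0 < ‖dvec m‖ := by rw [hnorm]; positivity
  set x : EuclideanSpace ℝ (Fin m) := (r * ‖dvec m‖⁻¹) • dvec m with hx
  have hxnorm : ‖x‖ = r := by
    rw [hx, norm_smul]
    rw [Real.norm_eq_abs, abs_of_nonneg (by positivity)]
    field_simp
  have hxball : x ∈ Metric.closedBall (0 : EuclideanSpace ℝ (Fin m)) r := by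
    rw [Metric.mem_closedBall, dist_zero_right, hxnorm]
  have hxconv := hball hxball
  have hhalf : convexHull ℝ (B m) ⊆ {z | (inner ℝ (dvec m) z : ℝ) ≤ 1} := by
    apply convexHull_min
    · intro b hb; exact inner_dvec_le b hb
    · exact convex_halfSpace_le
        ⟨fun a b => inner_add_right _ a b, fun c a => real_inner_smul_right _ a c⟩ 1
  have hle : (inner ℝ (dvec m) x : ℝ) ≤ 1 := hhalf hxconv
  rw [hx, real_inner_smul_right, real_inner_self_eq_norm_sq] at hle
  have : r * ‖dvec m‖ ≤ 1 := by
    have e : r * ‖dvec m‖⁻¹ * ‖dvec m‖ ^ 2 = r * ‖dvec m‖ := by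
      field_simp
    rwa [e] at hle
  rw [hnorm] at this
  have hs : 0 < Real.sqrt (DD m) := by positivity
  rw [inv_eq_one_div, le_div_iff₀ hs]
  linarith

lemma lower (hm : 1 ≤ m) :
    Metric.closedBall (0 : EuclideanSpace ℝ (Fin m)) (Real.sqrt (DD m))⁻¹ ⊆
      convexHull ℝ (B m) := by
  have hDD := DD_pos m hm
  intro x hx
  rw [Metric.mem_closedBall, dist_zero_right] at hx
  by_contra hxc
  obtain ⟨f, c, hc1, hc2⟩ := geometric_hahn_banach_closed_point
    (convex_convexHull ℝ (B m)) ((B_finite m).isClosed_convexHull (𝕜 := ℝ)) hxc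
  set y := (InnerProductSpace.toDual ℝ (EuclideanSpace ℝ (Fin m))).symm f with hy
  have hyf : ∀ z, (inner ℝ y z : ℝ) = f z := fun z => InnerProductSpace.toDual_symm_apply
  have hB' : ∀ b ∈ B m, (inner ℝ y b : ℝ) < c := fun b hb => by
    rw [hyf]; exact hc1 b (subset_convexHull ℝ (B m) hb)
  -- c > 0
  have hb0 := e0_mem hm
  have hcpos : 0 < c := by
    have h1 := hB' _ hb0
    have h2 := hB' _ (B_symm hb0)
    rw [inner_neg_right] at h2
    linarith
  -- apply key inequality
  have habs := fun S hS => abs_sum_bound y c hB' S hS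
  have hkey := sorted_key m (fun i => |y i|) c (le_of_lt hcpos)
    (fun i => abs_nonneg _) habs
  have hnormy : ∑ i, |y i| ^ 2 = ‖y‖ ^ 2 := by
    rw [norm_eq', Real.sq_sqrt (Finset.sum_nonneg fun i _ => sq_nonneg _)]
    exact Finset.sum_congr rfl fun i _ => sq_abs _
  rw [hnormy] at hkey
  -- c < ⟪y,x⟫ ≤ ‖y‖‖x‖
  have hcx : c < ‖y‖ * ‖x‖ := lt_of_lt_of_le (by rw [← hyf x] at hc2; exact hc2)
    (real_inner_le_norm y x)
  have hx2 : ‖x‖ ^ 2 ≤ (Real.sqrt (DD m))⁻¹ ^ 2 := by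
    apply pow_le_pow_left₀ (norm_nonneg x) hx
  have hinv : (Real.sqrt (DD m))⁻¹ ^ 2 * DD m = 1 := by
    rw [← Real.sqrt_sq (le_of_lt hDD)]
    rw [Real.sqrt_sq (le_of_lt hDD)]
    rw [inv_pow, Real.sq_sqrt (le_of_lt hDD)]
    field_simp
  nlinarith [norm_nonneg y, norm_nonneg x, sq_nonneg (‖y‖*‖x‖)]

theorem main (m : ℕ) (hm : 2 ≤ m) :
    2 / Real.sqrt (Real.log m + 5) < s m ∧ s m < 2 / Real.sqrt (Real.log m) := by
  have hm1 : 1 ≤ m := by omega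
  have hDD := DD_pos m hm1
  have hsqDD : 0 < Real.sqrt (DD m) := Real.sqrt_pos.2 hDD
  set r1 : ℝ := (Real.sqrt (DD m))⁻¹ with hr1
  have hr1pos : 0 < r1 := by positivity
  set T : Set ℝ := {r : ℝ | 0 ≤ r ∧
    Metric.closedBall (0 : EuclideanSpace ℝ (Fin m)) r ⊆ convexHull ℝ (B m)} with hT
  have hmemT : r1 ∈ T := ⟨le_of_lt hr1pos, lower hm1⟩
  have hboundT : ∀ r ∈ T, r ≤ r1 := fun r hr => upper r hm1 hr.1 hr.2
  have hsT : s m = sSup T := rfl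
  have hs_eq : s m = r1 := by
    rw [hsT]
    apply le_antisymm
    · exact csSup_le ⟨r1, hmemT⟩ hboundT
    · exact le_csSup ⟨r1, hboundT⟩ hmemT
  rw [hs_eq]
  have hlog : 0 < Real.log m := by
    apply Real.log_pos
    exact_mod_cast lt_of_lt_of_le one_lt_two (by exact_mod_cast hm)
  constructor
  · -- 2/√(log m + 5) < r1
    have h1 : Real.sqrt (DD m) < Real.sqrt ((Real.log m + 5)/4) :=
      Real.sqrt_lt_sqrt (le_of_lt hDD) (DD_lt m hm)
    have h2 : Real.sqrt ((Real.log m + 5)/4) = Real.sqrt (Real.log m + 5) / 2 := by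
      rw [Real.sqrt_div (by linarith) 4]
      rw [show (4:ℝ) = 2^2 by norm_num, Real.sqrt_sq (by norm_num)]
    rw [h2] at h1
    have h3 : 0 < Real.sqrt (Real.log m + 5) := Real.sqrt_pos.2 (by linarith)
    rw [hr1, div_lt_iff₀ h3]
    have h4 : 2 * Real.sqrt (DD m) < Real.sqrt (Real.log m + 5) := by linarith
    have h5 := mul_lt_mul_of_pos_left h4 (inv_pos.2 hsqDD)
    have hinv : (Real.sqrt (DD m))⁻¹ * Real.sqrt (DD m) = 1 := inv_mul_cancel₀ (ne_of_gt hsqDD)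
    nlinarith [h5, hinv]
  · -- r1 < 2/√(log m)
    have h1 : Real.sqrt (Real.log m / 4) < Real.sqrt (DD m) :=
      Real.sqrt_lt_sqrt (by positivity) (DD_gt m hm1)
    have h2 : Real.sqrt (Real.log m / 4) = Real.sqrt (Real.log m) / 2 := by
      rw [Real.sqrt_div (le_of_lt hlog) 4]
      rw [show (4:ℝ) = 2^2 by norm_num, Real.sqrt_sq (by norm_num)]
    rw [h2] at h1
    have hL : 0 < Real.sqrt (Real.log m) := Real.sqrt_pos.2 hlog
    rw [hr1, lt_div_iff₀ hL]
    have h4 : Real.sqrt (Real.log m) < 2 * Real.sqrt (DD m) := by linarith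
    have h5 := mul_lt_mul_of_pos_left h4 (inv_pos.2 hsqDD)
    have hinv : (Real.sqrt (DD m))⁻¹ * Real.sqrt (DD m) = 1 := inv_mul_cancel₀ (ne_of_gt hsqDD)
    nlinarith [h5, hinv]


end S13

theorem stmt13 (m : ℕ) (hm : 2 ≤ m) :
    2 / Real.sqrt (Real.log m + 5) < s m ∧ s m < 2 / Real.sqrt (Real.log m) :=
  S13.main m hm
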